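/- Let B ⊆ ℕ \ {1} be a set whose elements are pairwise coprime. Then for any finite B-admissible sets A₁, A₂ ⊆ ℤ there exists n ∈ ℤ such that (A₁ + n) ∪ A₂ is B-admissible. -/

import Mathlib

/-- `A ⊆ ℤ` is `B`-admissible if for every `b ∈ B` there is a residue class `r` mod `b`
such that no element of `A` is congruent to `r` mod `b`. -/
def IsAdmissible (B : Set ℕ) (A : Set ℤ) : Prop :=
  ∀ b ∈ B, ∃ r : ℤ, ∀ a ∈ A, ¬ ((b : ℤ) ∣ a - r)

/-- Chinese remainder theorem over a finite set of pairwise coprime moduli. -/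
lemma crt_finset (S : Finset ℕ) (c : ℕ → ℤ)
    (hcop : ∀ a ∈ S, ∀ b ∈ S, a ≠ b → Nat.Coprime a b) :
    ∃ n : ℤ, ∀ b ∈ S, (b : ℤ) ∣ n - c b := by
  classical
  induction S using Finset.induction_on with
  | empty => exact ⟨0, by simp⟩
  | @insert a S ha ih =>
    obtain ⟨n₀, hn₀⟩ := ih (fun x hx y hy hxy =>
      hcop x (Finset.mem_insert_of_mem hx) y (Finset.mem_insert_of_mem hy) hxy)
    set P : ℤ := ∏ b ∈ S, (b : ℤ) with hP
    have hcopP : IsCoprime (a : ℤ) P := by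
      apply IsCoprime.prod_right
      intro b hb
      rw [Int.isCoprime_iff_gcd_eq_one]
      exact_mod_cast hcop a (Finset.mem_insert_self a S) b (Finset.mem_insert_of_mem hb)
        (fun h => ha (h ▸ hb))
    obtain ⟨u, v, huv⟩ := hcopP
    refine ⟨n₀ + P * (v * (c a - n₀)), ?_⟩
    intro b hb
    rcases Finset.mem_insert.mp hb with rfl | hb
    · refine ⟨-u * (c b - n₀), ?_⟩
      linear_combination (c b - n₀) * huv
    · have hbP : (b : ℤ) ∣ P := Finset.dvd_prod_of_mem _ hb
      have := hn₀ b hb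
      have : (b : ℤ) ∣ (n₀ - c b) + P * (v * (c a - n₀)) :=
        dvd_add this (Dvd.dvd.mul_right hbP _)
      convert this using 1
      ring

/-- If the elements of `B ⊆ ℕ \ {1}` are pairwise coprime, then for any finite
`B`-admissible sets `A₁, A₂ ⊆ ℤ` there is `n ∈ ℤ` such that `(A₁ + n) ∪ A₂` is
`B`-admissible. -/
theorem coprime_implies_joint_admissibility (B : Set ℕ)
    (hB2 : ∀ b ∈ B, 2 ≤ b)
    (hcop : ∀ a ∈ B, ∀ b ∈ B, a ≠ b → Nat.Coprime a b)
    (A₁ A₂ : Set ℤ) (h₁ : A₁.Finite) (h₂ : A₂.Finite)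
    (ha₁ : IsAdmissible B A₁) (ha₂ : IsAdmissible B A₂) :
    ∃ n : ℤ, IsAdmissible B (((fun a => a + n) '' A₁) ∪ A₂) := by
  classical
  set N : ℕ := h₁.toFinset.card + h₂.toFinset.card with hN
  -- the small moduli
  set S : Finset ℕ := (Finset.range (N + 1)).filter (· ∈ B) with hS
  choose r₁ hr₁ using ha₁
  choose r₂ hr₂ using ha₂
  have hScop : ∀ a ∈ S, ∀ b ∈ S, a ≠ b → Nat.Coprime a b := by
    intro a haS b hbS hab
    simp only [hS, Finset.mem_filter] at haS hbS
    exact hcop a haS.2 b hbS.2 hab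
  obtain ⟨n, hn⟩ := crt_finset S
    (fun b => if h : b ∈ B then r₂ b h - r₁ b h else 0) hScop
  refine ⟨n, ?_⟩
  intro b hb
  by_cases hbN : b ≤ N
  · -- small modulus: use CRT
    have hbS : b ∈ S := by
      simp only [hS, Finset.mem_filter, Finset.mem_range]
      exact ⟨by omega, hb⟩
    have hdvd := hn b hbS
    rw [dif_pos hb] at hdvd
    refine ⟨r₂ b hb, ?_⟩
    rintro a (⟨a', ha', rfl⟩ | haA₂)
    · intro hcon
      apply hr₁ b hb a' ha'
      have : (b : ℤ) ∣ (a' + n - r₂ b hb) - (n - (r₂ b hb - r₁ b hb)) :=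
        dvd_sub hcon hdvd
      convert this using 1
      ring
    · exact hr₂ b hb a haA₂
  · -- large modulus: counting argument
    push_neg at hbN
    haveI : NeZero b := ⟨by omega⟩
    set T : Finset ℤ := h₁.toFinset.image (fun a => a + n) ∪ h₂.toFinset with hT
    have hTcard : T.card ≤ N := by
      calc T.card ≤ (h₁.toFinset.image (fun a => a + n)).card + h₂.toFinset.card :=
            Finset.card_union_le _ _
        _ ≤ h₁.toFinset.card + h₂.toFinset.card := by
            exact Nat.add_le_add_right (Finset.card_image_le (s := h₁.toFinset) (f := fun a => a + n)) _
    set F : Finset (ZMod b) := T.image (Int.cast : ℤ → ZMod b) with hF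
    have hFcard : F.card < Fintype.card (ZMod b) := by
      rw [ZMod.card]
      calc F.card ≤ T.card := Finset.card_image_le
        _ ≤ N := hTcard
        _ < b := hbN
    obtain ⟨x, hx⟩ : ∃ x : ZMod b, x ∉ F := by
      by_contra h
      push_neg at h
      have : F = Finset.univ := Finset.eq_univ_iff_forall.mpr h
      rw [this, Finset.card_univ] at hFcard
      exact lt_irrefl _ hFcard
    refine ⟨(x.val : ℤ), ?_⟩
    intro a haU hcon
    apply hx
    have haT : a ∈ T := by
      simp only [hT, Finset.mem_union, Finset.mem_image, Set.Finite.mem_toFinset]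
      rcases haU with ⟨a', ha', rfl⟩ | h
      · exact Or.inl ⟨a', ha', rfl⟩
      · exact Or.inr h
    have hcast : (a : ZMod b) = x := by
      have := (ZMod.intCast_zmod_eq_zero_iff_dvd (a - (x.val : ℤ)) b).mpr hcon
      push_cast at this
      have hxv : ((x.val : ℤ) : ZMod b) = x := by
        push_cast
        simp [ZMod.natCast_val, ZMod.cast_id]
      rw [sub_eq_zero] at this
      rw [this]
      exact_mod_cast hxv
    exact hF ▸ Finset.mem_image.mpr ⟨a, haT, hcast⟩
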